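/- Let G be a finitely generated residually finite group and φ an automorphism of G. If the fixed-point subgroup C_G(φ) = {g : φ(g) = g} is infinite, then φ has infinitely many twisted conjugacy classes (R(φ) = ∞). -/

import Mathlib

/-! ### Auxiliary material -/

/-- Bound for denominators in Egyptian fraction decompositions (Landau/Sylvester style). -/
def egyBound : ℕ → ℕ → ℕ
  | 0, _ => 0
  | (r+1), b => max ((r+1)*b) (egyBound r ((r+1)*b*b))

lemma egyBound_mono_b : ∀ (r : ℕ) {b b' : ℕ}, b ≤ b' → egyBound r b ≤ egyBound r b'
  | 0, _, _, _ => le_refl _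
  | (r+1), b, b', h => by
      simp only [egyBound]
      refine max_le_max (Nat.mul_le_mul_left _ h) (egyBound_mono_b r ?_)
      exact Nat.mul_le_mul (Nat.mul_le_mul_left _ h) h

lemma le_egyBound_succ (r b : ℕ) : egyBound r b ≤ egyBound (r+1) b := by
  have hb : b ≤ (r+1)*b*b := by
    rcases Nat.eq_zero_or_pos b with rfl | hb
    · simp
    · calc b = 1*b*1 := by ring
        _ ≤ (r+1)*b*b := Nat.mul_le_mul (Nat.mul_le_mul (by omega) (le_refl b)) hb
  calc egyBound r b ≤ egyBound r ((r+1)*b*b) := egyBound_mono_b r hb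
    _ ≤ _ := le_max_right _ _

lemma egyBound_mono_r {r n : ℕ} (h : r ≤ n) (b : ℕ) : egyBound r b ≤ egyBound n b := by
  induction n with
  | zero => interval_cases r; exact le_refl _
  | succ n ih =>
    rcases Nat.lt_or_ge r (n+1) with h' | h'
    · exact le_trans (ih (by omega)) (le_egyBound_succ n b)
    · have : r = n+1 := by omega
      subst this; exact le_refl _

/-- Any denominator in an Egyptian fraction decomposition of `q` into `r` unit fractions
is bounded in terms of `r` and a bound `b` for the denominator of `q`. -/
lemma egy_le : ∀ (r : ℕ) {ι : Type*} [DecidableEq ι] (b : ℕ) (q : ℚ), 0 < q → q.den ≤ b →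
    ∀ (t : Finset ι) (f : ι → ℕ), (∀ i ∈ t, 0 < f i) → t.card = r →
    ∑ i ∈ t, (1:ℚ)/(f i) = q → ∀ i ∈ t, f i ≤ egyBound r b := by
  intro r
  induction r with
  | zero =>
    intro ι _ b q hq hden t f hpos hcard hsum i hi
    rw [Finset.card_eq_zero] at hcard; subst hcard; simp at hi
  | succ r ih =>
    intro ι _ b q hq hden t f hpos hcard hsum i hi
    have hb : 0 < b := lt_of_lt_of_le q.pos hden
    have hA : (0:ℚ) < (r:ℚ)+1 := by positivity
    have hqb : (1:ℚ)/b ≤ q := by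
      have h1 : (1:ℚ)/q.den ≤ q := by
        rw [div_le_iff₀ (by exact_mod_cast q.den_pos)]
        have hnum : (1:ℚ) ≤ q.num := by exact_mod_cast Rat.num_pos.mpr hq
        calc (1:ℚ) ≤ q.num := hnum
          _ = q * q.den := by exact_mod_cast (Rat.mul_den_eq_num q).symm
      calc (1:ℚ)/b ≤ 1/q.den := by
            apply one_div_le_one_div_of_le (by exact_mod_cast q.den_pos)
            exact_mod_cast hden
        _ ≤ q := h1
    have hlarge : ∀ j ∈ t, q/((r:ℚ)+1) ≤ (1:ℚ)/(f j) → f j ≤ (r+1)*b := by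
      intro j hj hjq
      have hfj : (0:ℚ) < f j := by exact_mod_cast hpos j hj
      rw [div_le_div_iff₀ hA hfj] at hjq
      have hqbb : (1:ℚ) ≤ q * b := by
        rw [div_le_iff₀ (by exact_mod_cast hb)] at hqb; linarith
      have : (f j : ℚ) ≤ ((r+1)*b : ℕ) := by
        push_cast
        nlinarith [hq, hfj]
      exact_mod_cast this
    by_cases hcase : q/((r:ℚ)+1) ≤ (1:ℚ)/(f i)
    · have := hlarge i hi hcase
      simp only [egyBound]
      exact le_trans this (le_max_left _ _)
    · push_neg at hcase
      have hne : t.Nonempty := ⟨i, hi⟩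
      have hex : ∃ y ∈ t, q/((r:ℚ)+1) ≤ (1:ℚ)/(f y) := by
        by_contra hall
        push_neg at hall
        have hlt : ∑ j ∈ t, (1:ℚ)/(f j) < ∑ j ∈ t, q/((r:ℚ)+1) :=
          Finset.sum_lt_sum_of_nonempty hne (fun j hj => hall j hj)
        rw [Finset.sum_const, hcard, nsmul_eq_mul, hsum] at hlt
        have hcast : ((r+1 : ℕ):ℚ) = (r:ℚ)+1 := by push_cast; ring
        rw [hcast, mul_div_cancel₀ _ (ne_of_gt hA)] at hlt
        exact lt_irrefl _ hlt
      obtain ⟨y, hy, hylarge⟩ := hex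
      have hiy : i ≠ y := by
        intro h; rw [h] at hcase; exact absurd hylarge (not_le.mpr hcase)
      have hfy : (0:ℚ) < f y := by exact_mod_cast hpos y hy
      set q' := q - 1/(f y) with hq'def
      have htsub : ∑ j ∈ t.erase y, (1:ℚ)/(f j) = q' := by
        have := Finset.sum_erase_add t (fun j => (1:ℚ)/(f j)) hy
        rw [hq'def]; linarith [this, hsum]
      have hit' : i ∈ t.erase y := Finset.mem_erase.mpr ⟨hiy, hi⟩
      have hq'pos : 0 < q' := by
        rw [← htsub]
        have h1 : (1:ℚ)/(f i) ≤ ∑ j ∈ t.erase y, (1:ℚ)/(f j) :=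
          Finset.single_le_sum (f := fun j => (1:ℚ)/(f j)) (fun j hj => by positivity) hit'
        have h2 : (0:ℚ) < 1/(f i) := by
          have : (0:ℚ) < f i := by exact_mod_cast hpos i hi
          positivity
        linarith
      have hfyb : f y ≤ (r+1)*b := hlarge y hy hylarge
      have hq'den : q'.den ≤ (r+1)*b*b := by
        have hden1 : ((1:ℚ)/(f y)).den = f y := by
          rw [one_div]; exact Rat.inv_natCast_den_of_pos (hpos y hy)
        have hdvd : q'.den ∣ q.den * ((1:ℚ)/(f y)).den := by
          have heq : q' = q + (-(1/(f y))) := by rw [hq'def]; ring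
          rw [heq]
          have := Rat.add_den_dvd q (-(1/((f y):ℚ)))
          rwa [Rat.neg_den] at this
        have hle : q'.den ≤ q.den * f y := by
          rw [hden1] at hdvd
          exact Nat.le_of_dvd (Nat.mul_pos q.den_pos (hpos y hy)) hdvd
        calc q'.den ≤ q.den * f y := hle
          _ ≤ b * ((r+1)*b) := Nat.mul_le_mul hden hfyb
          _ = (r+1)*b*b := by ring
      have := ih ((r+1)*b*b) q' hq'pos hq'den (t.erase y) f
        (fun j hj => hpos j (Finset.mem_of_mem_erase hj))
        (by rw [Finset.card_erase_of_mem hy, hcard]; omega) htsub i hit'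
      simp only [egyBound]
      exact le_trans this (le_max_right _ _)

/-- In a finitely generated group there are finitely many homs to a finite monoid. -/
lemma finite_monoidHom (G M : Type*) [Group G] [Group.FG G] [Monoid M] [Finite M] :
    Finite (G →* M) := by
  obtain ⟨S, hStop, hSfin⟩ := Group.fg_iff.mp ‹Group.FG G›
  have : Finite ↥S := hSfin.to_subtype
  refine Finite.of_injective (fun f => (fun s : S => f s)) ?_
  intro f g h
  refine MonoidHom.eq_of_eqOn_dense hStop ?_
  intro x hx
  exact congrFun h ⟨x, hx⟩

/-- In a f.g. group, there are finitely many normal subgroups of a given finite index. -/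
lemma finite_normal_of_index (G : Type*) [Group G] [Group.FG G] (c : ℕ) (hc : c ≠ 0) :
    {H : Subgroup G | H.Normal ∧ H.index = c}.Finite := by
  have : Finite (G →* Equiv.Perm (Fin c)) := finite_monoidHom G _
  rw [← Set.finite_coe_iff]
  have key : ∀ H : {H : Subgroup G | H.Normal ∧ H.index = c},
      ∃ f : G →* Equiv.Perm (Fin c), f.ker = (H : Subgroup G) := by
    rintro ⟨H, hN, hidx⟩
    have hcard : Nat.card (G ⧸ H) = c := by rw [← hidx]; exact H.index_eq_card.symm
    have hfin : Finite (G ⧸ H) :=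
      (Nat.card_pos_iff.mp (by rw [hcard]; omega)).2
    have e : (G ⧸ H) ≃ Fin c := Finite.equivFinOfCardEq hcard
    refine ⟨(Equiv.Perm.viaEmbeddingHom e.toEmbedding).comp (MulAction.toPermHom G (G ⧸ H)), ?_⟩
    have hker : (MulAction.toPermHom G (G ⧸ H)).ker = H := by
      rw [← Subgroup.normalCore_eq_ker]
      exact H.normalCore_eq_self
    show _ = H
    have hmem : ∀ x : G, MulAction.toPermHom G (G ⧸ H) x = 1 ↔ x ∈ H := by
      intro x; rw [← MonoidHom.mem_ker, hker]
    ext x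
    simp only [MonoidHom.mem_ker, MonoidHom.comp_apply]
    constructor
    · intro hx
      refine (hmem x).mp ?_
      apply Equiv.Perm.viaEmbeddingHom_injective e.toEmbedding
      rw [hx, map_one]
    · intro hx
      rw [(hmem x).mpr hx, map_one]
  choose f hf using key
  refine Finite.of_injective f ?_
  intro H1 H2 h
  have : (H1 : Subgroup G) = (H2 : Subgroup G) := by rw [← hf H1, ← hf H2, h]
  exact Subtype.ext this

/-- Type synonym on which we put the twisted conjugation action. -/
def TwT (Q : Type*) : Type _ := Q

/-- The identity map into the type synonym. -/
def TwT.mk {Q : Type*} (q : Q) : TwT Q := q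

/-- The identity map out of the type synonym. -/
def TwT.down {Q : Type*} (g : TwT Q) : Q := g

/-- The twisted conjugation action `x • g = x g ψ(x)⁻¹`. -/
def twMulAction {Q : Type*} [Group Q] (ψ : Q ≃* Q) : MulAction Q (TwT Q) where
  smul x g := TwT.mk (x * g.down * (ψ x)⁻¹)
  one_smul g := by
    show TwT.mk (1 * g.down * (ψ 1)⁻¹) = g
    simp [TwT.mk, TwT.down]
    exact one_mul (M := Q) g
  mul_smul x y g := by
    show TwT.mk ((x*y) * g.down * (ψ (x*y))⁻¹)
      = TwT.mk (x * (TwT.mk (y * g.down * (ψ y)⁻¹)).down * (ψ x)⁻¹)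
    simp [TwT.mk, TwT.down, map_mul, mul_assoc]
    have hassoc : ∀ a b c d e : Q, a * b * c * (d * e) = a * (b * c * (d * e)) := by
      intro a b c d e; simp only [mul_assoc]
    exact hassoc x y (TwT.down g) _ _

/-- A group is residually finite if every nontrivial element survives in some
finite quotient (equivalently, avoids some finite-index normal subgroup). -/
def IsResiduallyFinite (G : Type*) [Group G] : Prop :=
  ∀ g : G, g ≠ 1 → ∃ H : Subgroup G, H.Normal ∧ H.FiniteIndex ∧ g ∉ H

/-- The setoid of `φ`-twisted conjugacy: `g ~ h` iff `h = x * g * φ(x)⁻¹` for some `x`. -/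
def twistedConjSetoid {G : Type*} [Group G] (φ : G ≃* G) : Setoid G where
  r g h := ∃ x : G, h = x * g * (φ x)⁻¹
  iseqv := by
    refine ⟨fun g => ⟨1, by simp⟩, ?_, ?_⟩
    · rintro g h ⟨x, rfl⟩
      exact ⟨x⁻¹, by simp [mul_assoc]⟩
    · rintro a b c ⟨x, rfl⟩ ⟨y, rfl⟩
      exact ⟨y * x, by simp [map_mul, mul_assoc]⟩

/-- If `G` is finitely generated residually finite and `Fix(φ)` is infinite,
then `φ` has infinitely many twisted conjugacy classes. -/
theorem stmt_13 {G : Type*} [Group G] [Group.FG G]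
    (hrf : IsResiduallyFinite G) (φ : G ≃* G)
    (hfix : Infinite {g : G // φ g = g}) :
    Infinite (Quotient (twistedConjSetoid φ)) := by
  by_contra hinf
  rw [not_infinite_iff_finite] at hinf
  set n := Nat.card (Quotient (twistedConjSetoid φ)) with hn
  set m := egyBound n 1 + 1 with hm
  -- m distinct fixed points
  let u : Fin m ↪ {g : G // φ g = g} :=
    (Fin.valEmbedding.trans (Infinite.natEmbedding _))
  -- separating subgroups
  have key : ∀ p : Fin m × Fin m, ∃ H : Subgroup G, H.Normal ∧ H.FiniteIndex ∧
      (((u p.1 : G))⁻¹ * (u p.2 : G) ∈ H → p.1 = p.2) := by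
    intro p
    by_cases hp : p.1 = p.2
    · exact ⟨⊤, inferInstance, inferInstance, fun _ => hp⟩
    · have hne : ((u p.1 : G))⁻¹ * (u p.2 : G) ≠ 1 := by
        intro h
        rw [inv_mul_eq_one] at h
        exact hp (u.injective (Subtype.ext h))
      obtain ⟨H, h1, h2, h3⟩ := hrf _ hne
      exact ⟨H, h1, h2, fun hmem => absurd hmem h3⟩
  choose HH hnorm hfinidx hsep using key
  haveI : ∀ p, (HH p).FiniteIndex := hfinidx
  set N₀ : Subgroup G := ⨅ p, HH p with hN₀
  haveI hN₀fin : N₀.FiniteIndex := Subgroup.finiteIndex_iInf hfinidx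
  set c := N₀.index with hc_def
  have hc : c ≠ 0 := hN₀fin.index_ne_zero
  have hN₀norm : N₀.Normal := by
    constructor
    intro x hx g
    rw [hN₀, Subgroup.mem_iInf] at hx ⊢
    exact fun p => (hnorm p).conj_mem x (hx p) g
  -- the characteristic core Λ
  set S := {H : Subgroup G | H.Normal ∧ H.index = c} with hS
  have hSfin := finite_normal_of_index G c hc
  set Λ := sInf S with hΛdef
  have hN₀S : N₀ ∈ S := ⟨hN₀norm, rfl⟩
  have hΛle : Λ ≤ N₀ := sInf_le hN₀S
  haveI hΛnorm : Λ.Normal := by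
    constructor
    intro x hx g
    rw [hΛdef, Subgroup.mem_sInf] at hx ⊢
    exact fun H hH => hH.1.conj_mem x (hx H hH) g
  haveI hΛfin : Λ.FiniteIndex := by
    haveI : Finite ↥S := hSfin.to_subtype
    haveI : ∀ H : ↥S, (H : Subgroup G).FiniteIndex := fun H => ⟨by rw [H.2.2]; exact hc⟩
    rw [hΛdef, sInf_eq_iInf']
    exact Subgroup.finiteIndex_iInf (fun H => inferInstance)
  -- Λ is φ-invariant
  have hφS : ∀ H, H ∈ S → H.comap (φ : G →* G) ∈ S := by
    intro H hH
    refine ⟨hH.1.comap _, ?_⟩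
    rw [Subgroup.index_comap_of_surjective _ φ.surjective]
    exact hH.2
  have hΛcomap : ∀ (e : G ≃* G), (∀ H, H ∈ S → H.comap (e : G →* G) ∈ S) →
      Λ ≤ Λ.comap (e : G →* G) := by
    intro e he
    intro x hx
    rw [Subgroup.mem_comap]
    rw [hΛdef, Subgroup.mem_sInf] at hx ⊢
    intro H hH
    exact hx _ (he H hH)
  have hφS' : ∀ H, H ∈ S → H.comap (φ.symm : G →* G) ∈ S := by
    intro H hH
    refine ⟨hH.1.comap _, ?_⟩
    rw [Subgroup.index_comap_of_surjective _ φ.symm.surjective]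
    exact hH.2
  have hΛinv : Λ.comap (φ : G →* G) = Λ := by
    refine le_antisymm ?_ (hΛcomap φ hφS)
    intro x hx
    rw [Subgroup.mem_comap] at hx
    have := hΛcomap φ.symm hφS' hx
    rw [Subgroup.mem_comap] at this
    simpa using this
  have hΛmap : Λ.map (φ : G →* G) = Λ := by
    rw [Subgroup.map_equiv_eq_comap_symm]
    have : Λ.comap (φ.symm : G →* G) = Λ := by
      refine le_antisymm ?_ (hΛcomap φ.symm hφS')
      intro x hx
      rw [Subgroup.mem_comap] at hx
      have := hΛcomap φ hφS hx
      rw [Subgroup.mem_comap] at this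
      simpa using this
    exact this
  -- pass to the finite quotient Q
  set Q := G ⧸ Λ with hQ
  haveI hQfin : Finite Q := by
    have : Nat.card Q ≠ 0 := by
      rw [← Subgroup.index_eq_card]
      exact hΛfin.index_ne_zero
    exact (Nat.card_pos_iff.mp (by omega)).2
  set ψ : Q ≃* Q := QuotientGroup.congr Λ Λ φ hΛmap with hψ
  have hψmk : ∀ g : G, ψ (QuotientGroup.mk g) = QuotientGroup.mk (φ g) := by
    intro g
    exact QuotientGroup.congr_mk Λ Λ φ hΛmap g
  -- twisted action
  letI act : MulAction Q (TwT Q) := twMulAction ψ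
  letI : Fintype Q := Fintype.ofFinite Q
  letI : Fintype (TwT Q) := inferInstanceAs (Fintype Q)
  letI : ∀ b : TwT Q, Fintype (MulAction.stabilizer Q b) := fun b => Fintype.ofFinite _
  letI : Fintype (Quotient (MulAction.orbitRel Q (TwT Q))) := Fintype.ofFinite _
  set Ω := Quotient (MulAction.orbitRel Q (TwT Q)) with hΩ
  -- surjection from twisted classes of G onto orbits
  have hsurj : ∃ F : Quotient (twistedConjSetoid φ) → Ω, Function.Surjective F := by
    refine ⟨Quotient.lift
      (fun g => (Quotient.mk (MulAction.orbitRel Q (TwT Q)) (TwT.mk (QuotientGroup.mk g)) : Ω))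
      ?_, ?_⟩
    · rintro g h ⟨x, rfl⟩
      apply Quotient.sound
      show MulAction.orbitRel Q (TwT Q) _ _
      rw [MulAction.orbitRel_apply]
      refine ⟨((QuotientGroup.mk x : Q))⁻¹, ?_⟩
      show TwT.mk (((QuotientGroup.mk x : Q))⁻¹
        * (TwT.mk (QuotientGroup.mk (x * g * (φ x)⁻¹) : Q)).down
        * (ψ ((QuotientGroup.mk x : Q))⁻¹)⁻¹) = TwT.mk (QuotientGroup.mk g)
      rw [map_inv, hψmk, inv_inv]
      show TwT.mk (((QuotientGroup.mk x : Q))⁻¹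
        * (QuotientGroup.mk (x * g * (φ x)⁻¹) : Q)
        * (QuotientGroup.mk (φ x) : Q)) = TwT.mk (QuotientGroup.mk g)
      congr 1
      rw [← QuotientGroup.mk_inv, ← QuotientGroup.mk_mul, ← QuotientGroup.mk_mul]
      congr 1
      group
    · intro ω
      obtain ⟨q, rfl⟩ := Quotient.exists_rep ω
      obtain ⟨g, rfl⟩ := QuotientGroup.mk_surjective (TwT.down q)
      exact ⟨Quotient.mk _ g, rfl⟩
  obtain ⟨F, hF⟩ := hsurj
  have hrn : Nat.card Ω ≤ n := by
    rw [hn]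
    exact Nat.card_le_card_of_surjective F hF
  -- the class equation in ℚ
  classical
  set st : Ω → ℕ := fun ω => Nat.card (MulAction.stabilizer Q (Quotient.out ω)) with hst
  have hstf : ∀ ω : Ω, st ω = Fintype.card (MulAction.stabilizer Q (Quotient.out ω)) :=
    fun ω => Nat.card_eq_fintype_card
  have hstpos : ∀ ω : Ω, 0 < st ω := fun ω => by rw [hstf ω]; exact Fintype.card_pos
  have hstdvd : ∀ ω : Ω, st ω ∣ Fintype.card Q := by
    intro ω
    have := Subgroup.card_subgroup_dvd_card (MulAction.stabilizer Q (Quotient.out ω))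
    rwa [Nat.card_eq_fintype_card (α := Q)] at this
  have hQpos : 0 < Fintype.card Q := Fintype.card_pos
  have hclass := MulAction.card_eq_sum_card_group_div_card_stabilizer Q (TwT Q)
  have hTwQ : Fintype.card (TwT Q) = Fintype.card Q := rfl
  have hsum : ∑ ω : Ω, (1:ℚ)/(st ω) = 1 := by
    have hterm : ∀ ω : Ω, (1:ℚ)/(st ω)
        = ((Fintype.card Q / st ω : ℕ) : ℚ) / (Fintype.card Q : ℚ) := by
      intro ω
      rw [Nat.cast_div (hstdvd ω) (by exact_mod_cast (hstpos ω).ne')]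
      rw [div_div, mul_comm, ← div_div, div_self (by exact_mod_cast hQpos.ne')]
    calc ∑ ω : Ω, (1:ℚ)/(st ω)
        = ∑ ω : Ω, ((Fintype.card Q / st ω : ℕ) : ℚ) / (Fintype.card Q : ℚ) := by
          exact Finset.sum_congr rfl (fun ω _ => hterm ω)
      _ = ((∑ ω : Ω, (Fintype.card Q / st ω : ℕ) : ℕ) : ℚ) / (Fintype.card Q : ℚ) := by
          rw [← Finset.sum_div]; push_cast; ring
      _ = 1 := by
          have : ∑ ω : Ω, Fintype.card Q / st ω
              = ∑ ω : Ω, Fintype.card Q / Fintype.card (MulAction.stabilizer Q (Quotient.out ω)) :=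
            Finset.sum_congr rfl (fun ω _ => by rw [hstf ω])
          rw [this, ← hclass, hTwQ, div_self (by exact_mod_cast hQpos.ne')]
  -- apply the Egyptian fraction bound
  have hbound : ∀ ω : Ω, st ω ≤ egyBound (Fintype.card Ω) 1 := by
    intro ω
    exact egy_le (Fintype.card Ω) 1 1 one_pos (le_refl _) Finset.univ st
      (fun ω _ => hstpos ω) (Finset.card_univ) hsum ω (Finset.mem_univ ω)
  -- the m fixed points give m distinct elements of the stabilizer of 1
  have hmemstab : ∀ i : Fin m, (QuotientGroup.mk (u i : G) : Q) ∈
      MulAction.stabilizer Q (TwT.mk (1 : Q)) := by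
    intro i
    rw [MulAction.mem_stabilizer_iff]
    show TwT.mk ((QuotientGroup.mk (u i : G) : Q) * (TwT.mk (1:Q)).down
      * (ψ (QuotientGroup.mk (u i : G)))⁻¹) = TwT.mk (1 : Q)
    rw [hψmk, (u i).2]
    show TwT.mk ((QuotientGroup.mk (u i : G) : Q) * 1
      * ((QuotientGroup.mk (u i : G) : Q))⁻¹) = TwT.mk (1 : Q)
    congr 1
    group
  have hinj : Function.Injective (fun i : Fin m =>
      (⟨QuotientGroup.mk (u i : G), hmemstab i⟩ :
        MulAction.stabilizer Q (TwT.mk (1:Q)))) := by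
    intro i j hij
    have hQeq : (QuotientGroup.mk (u i : G) : Q) = QuotientGroup.mk (u j : G) :=
      congrArg Subtype.val hij
    have h1 : (QuotientGroup.mk (((u i : G))⁻¹ * (u j : G)) : Q) = 1 := by
      rw [QuotientGroup.mk_mul, QuotientGroup.mk_inv, hQeq]
      group
    have h2 : ((u i : G))⁻¹ * (u j : G) ∈ Λ := (QuotientGroup.eq_one_iff _).mp h1
    have h3 : Λ ≤ HH (i, j) := le_trans hΛle (by rw [hN₀]; exact iInf_le HH (i, j))
    exact hsep (i, j) (h3 h2)
  have hmcard : m ≤ Nat.card (MulAction.stabilizer Q (TwT.mk (1:Q))) := by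
    have := Nat.card_le_card_of_injective _ hinj
    simpa using this
  set ω₀ : Ω := Quotient.mk (MulAction.orbitRel Q (TwT Q)) (TwT.mk (1 : Q)) with hω₀
  have hrel : MulAction.orbitRel Q (TwT Q) (Quotient.out ω₀) (TwT.mk (1:Q)) :=
    Quotient.exact (Quotient.out_eq ω₀)
  have hcardeq : Nat.card (MulAction.stabilizer Q (TwT.mk (1:Q))) = st ω₀ := by
    rw [hst]
    exact Nat.card_congr (MulAction.stabilizerEquivStabilizerOfOrbitRel hrel).toEquiv.symm
  have hfinal : m ≤ egyBound n 1 := by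
    calc m ≤ Nat.card (MulAction.stabilizer Q (TwT.mk (1:Q))) := hmcard
      _ = st ω₀ := hcardeq
      _ ≤ egyBound (Fintype.card Ω) 1 := hbound ω₀
      _ ≤ egyBound n 1 :=
          egyBound_mono_r (by rw [← Nat.card_eq_fintype_card]; exact hrn) 1
  omega
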